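/- (Kurdyka–Łojasiewicz convergence mechanism.) Let {x^k}_{k∈ℕ} ⊂ ℝ^m, {d^k}_{k∈ℕ} ⊂ ℝ^m, let φ : ℝ^m → ℝ, and let μ, c, Ĉ > 0 and θ ∈ (0,1). Assume: (a) φ(x^{k+1}) + μ‖d^k‖₂² ≤ φ(x^k) for all k; (b) ‖x^{k+1} − x^k‖₂ ≤ c‖d^k‖₂ for all k; (c) the sequence φ(x^k) converges to some φ_∞ ∈ ℝ; (d) (φ(x^k) − φ_∞)^θ ≤ Ĉ‖d^k‖₂ for all k. Then Σ_{k=0}^∞ ‖d^k‖₂ < ∞, the sequence {x^k} is a Cauchy sequence, and {x^k} converges to some x̄ ∈ ℝ^m. -/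

import Mathlib

/-- Kurdyka–Łojasiewicz convergence mechanism: sufficient decrease,
the step bound, convergence of the values and the KL-type inequality imply summability
of `‖d^k‖₂`, the Cauchy property and convergence of the iterates. -/
theorem stmt_17 (m : ℕ) (x d : ℕ → EuclideanSpace ℝ (Fin m))
    (φ : EuclideanSpace ℝ (Fin m) → ℝ)
    (μ c Chat : ℝ) (hμ : 0 < μ) (hc : 0 < c) (hChat : 0 < Chat)
    (θ : ℝ) (hθ : θ ∈ Set.Ioo (0 : ℝ) 1)
    (ha : ∀ k : ℕ, φ (x (k + 1)) + μ * ‖d k‖ ^ 2 ≤ φ (x k))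
    (hb : ∀ k : ℕ, ‖x (k + 1) - x k‖ ≤ c * ‖d k‖)
    (φinf : ℝ) (hconv : Filter.Tendsto (fun k => φ (x k)) Filter.atTop (nhds φinf))
    (hKL : ∀ k : ℕ, (φ (x k) - φinf) ^ θ ≤ Chat * ‖d k‖) :
    (Summable fun k : ℕ => ‖d k‖) ∧ CauchySeq x ∧
      ∃ xbar : EuclideanSpace ℝ (Fin m), Filter.Tendsto x Filter.atTop (nhds xbar) := by
  obtain ⟨hθ0, hθ1⟩ := hθ
  set E : ℕ → ℝ := fun k => φ (x k) - φinf with hE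
  have hEconv : Filter.Tendsto E Filter.atTop (nhds 0) := by
    simpa using hconv.sub_const φinf
  have hdec : ∀ k, E (k + 1) + μ * ‖d k‖ ^ 2 ≤ E k := by
    intro k; simp only [hE]; linarith [ha k]
  have hanti : Antitone E := by
    apply antitone_nat_of_succ_le
    intro k
    nlinarith [hdec k, sq_nonneg ‖d k‖, hμ.le]
  have hEnn : ∀ k, 0 ≤ E k := fun k => hanti.le_of_tendsto hEconv k
  -- key per-step estimate
  set g : ℕ → ℝ := fun k => E k ^ (1 - θ) with hg
  have hgnn : ∀ k, 0 ≤ g k := fun k => Real.rpow_nonneg (hEnn k) _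
  have hgmono : ∀ k, g (k + 1) ≤ g k := by
    intro k
    exact Real.rpow_le_rpow (hEnn (k + 1)) (hanti (Nat.le_succ k)) (by linarith)
  have key : ∀ k, ‖d k‖ ≤ Chat / (μ * (1 - θ)) * (g k - g (k + 1)) := by
    intro k
    have hKk : E k ^ θ ≤ Chat * ‖d k‖ := hKL k
    rcases eq_or_lt_of_le (norm_nonneg (d k)) with h0 | hpos
    · rw [← h0]
      have h1 : 0 ≤ g k - g (k + 1) := by linarith [hgmono k]
      have h2 : 0 ≤ Chat / (μ * (1 - θ)) :=
        div_nonneg hChat.le (mul_nonneg hμ.le (by linarith))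
      exact mul_nonneg h2 h1
    · -- E k > 0
      have hEk : 0 < E k := by
        rcases eq_or_lt_of_le (hEnn k) with h | h
        · exfalso
          have := hdec k
          nlinarith [hEnn (k + 1), mul_pos hμ (pow_pos hpos 2)]
        · exact h
      -- concavity / AM-GM step
      have hamgm : E k ^ θ * E (k + 1) ^ (1 - θ) ≤ θ * E k + (1 - θ) * E (k + 1) :=
        Real.geom_mean_le_arith_mean2_weighted hθ0.le (by linarith) (hEnn k)
          (hEnn (k + 1)) (by ring)
      have hinv : (0:ℝ) < E k ^ (-θ) := Real.rpow_pos_of_pos hEk _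
      have hsplit : E k ^ (1 - θ) = E k * E k ^ (-θ) := by
        rw [← Real.rpow_one_add' (le_of_lt hEk) (by intro h; linarith)]
        ring_nf
      have hsplit2 : E (k + 1) ^ (1 - θ) = E k ^ θ * E (k + 1) ^ (1 - θ) * E k ^ (-θ) := by
        have : E k ^ θ * E k ^ (-θ) = 1 := by
          rw [← Real.rpow_add hEk]; simp
        calc E (k + 1) ^ (1 - θ) = E (k + 1) ^ (1 - θ) * (E k ^ θ * E k ^ (-θ)) := by
              rw [this]; ring
          _ = E k ^ θ * E (k + 1) ^ (1 - θ) * E k ^ (-θ) := by ring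
      have hconcave : (1 - θ) * E k ^ (-θ) * (E k - E (k + 1)) ≤ g k - g (k + 1) := by
        simp only [hg]
        rw [hsplit, hsplit2]
        nlinarith [hinv, hamgm]
      -- μ * E k ^ θ * ‖d k‖ ≤ Chat * (E k - E (k+1))
      have hmain : μ * E k ^ θ * ‖d k‖ ≤ Chat * (E k - E (k + 1)) := by
        have h1 : μ * ‖d k‖ ^ 2 ≤ E k - E (k + 1) := by linarith [hdec k]
        nlinarith [mul_le_mul_of_nonneg_left hKk (mul_nonneg hμ.le hpos.le),
          mul_le_mul_of_nonneg_left h1 hChat.le]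
      -- combine
      have hEθ : (0:ℝ) < E k ^ θ := Real.rpow_pos_of_pos hEk _
      have hinvθ : E k ^ (-θ) = (E k ^ θ)⁻¹ := by
        rw [Real.rpow_neg hEk.le]
      rw [div_mul_eq_mul_div, le_div_iff₀ (mul_pos hμ (by linarith))]
      calc ‖d k‖ * (μ * (1 - θ))
          = (1 - θ) * (μ * E k ^ θ * ‖d k‖) * (E k ^ θ)⁻¹ := by
            field_simp
        _ ≤ (1 - θ) * (Chat * (E k - E (k + 1))) * (E k ^ θ)⁻¹ := by
            apply mul_le_mul_of_nonneg_right _ (by positivity)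
            apply mul_le_mul_of_nonneg_left hmain (by linarith)
        _ = Chat * ((1 - θ) * E k ^ (-θ) * (E k - E (k + 1))) := by
            rw [hinvθ]; ring
        _ ≤ Chat * (g k - g (k + 1)) := by
            apply mul_le_mul_of_nonneg_left hconcave hChat.le
  -- summability
  have hK : (0:ℝ) ≤ Chat / (μ * (1 - θ)) :=
    div_nonneg hChat.le (mul_nonneg hμ.le (by linarith))
  have hsum : Summable fun k : ℕ => ‖d k‖ := by
    apply summable_of_sum_range_le (fun k => norm_nonneg (d k))
      (c := Chat / (μ * (1 - θ)) * g 0)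
    intro n
    calc ∑ i ∈ Finset.range n, ‖d i‖
        ≤ ∑ i ∈ Finset.range n, Chat / (μ * (1 - θ)) * (g i - g (i + 1)) :=
          Finset.sum_le_sum fun i _ => key i
      _ = Chat / (μ * (1 - θ)) * (g 0 - g n) := by
          rw [← Finset.mul_sum, Finset.sum_range_sub' g]
      _ ≤ Chat / (μ * (1 - θ)) * g 0 := by
          apply mul_le_mul_of_nonneg_left _ hK
          linarith [hgnn n]
  refine ⟨hsum, ?_, ?_⟩
  · apply cauchySeq_of_summable_dist
    apply Summable.of_nonneg_of_le (fun n => dist_nonneg) _ (hsum.mul_left c)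
    intro n
    rw [dist_eq_norm, ← norm_neg]
    simpa using hb n
  · have hcauchy : CauchySeq x := by
      apply cauchySeq_of_summable_dist
      apply Summable.of_nonneg_of_le (fun n => dist_nonneg) _ (hsum.mul_left c)
      intro n
      rw [dist_eq_norm, ← norm_neg]
      simpa using hb n
    exact cauchySeq_tendsto_of_complete hcauchy
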